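/- Let K ≥ 2 and 1 ≤ M ≤ K, and let the normalized channel gains satisfy 0 < H₁ ≤ … ≤ H_{M−1} ≤ H_e < H_M ≤ … ≤ H_K. Let A₁, …, A_K ≥ 1, α > 0, P_c ≥ 0, and P_max ≥ P_min, where P_min = Σ_{k=1}^K (A_k − 1)/H_k · ∏_{j=1}^{k−1} A_j. For p ∈ ℝ₊^K let θ_k(p) = Σ_{i=k}^K p_i (with θ_{K+1}(p) = 0), and define the objective Ψ(p) = Σ_{k=M}^K [ (1/2)·log₂(1 + H_k·p_k/(H_k·θ_{k+1}(p) + 1)) − (1/2)·log₂(1 + H_e·p_k/(H_e·θ_{k+1}(p) + 1)) ] − α·(θ₁(p) + P_c), and the feasible set Π = {p ∈ ℝ₊^K : θ₁(p) ≤ P_max and θ_k(p) ≥ A_k·θ_{k+1}(p) + (A_k − 1)/H_k for all k}. For t ≥ 0 define the power vector p(t) ∈ ℝ^K by p_K(t) = t and, recursively for k = K−1 down to 1, p_k(t) = (A_k − 1)·(1/H_k + θ_{k+1}(p(t))); equivalently p_k(t) = (A_k − 1)·(1/H_k + t·∏_{i=k+1}^{K−1} A_i + Σ_{i=k+1}^{K−1}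 (A_i − 1)/H_i · ∏_{j=k+1}^{i−1} A_j). Let u = (P_max − P_min + (A_K − 1)/H_K · ∏_{j=1}^{K−1} A_j)/∏_{j=1}^{K−1} A_j. Then for every t ∈ [(A_K − 1)/H_K, u] the vector p(t) lies in Π, and the maximum of Ψ over Π is attained and equals the maximum of t ↦ Ψ(p(t)) over the interval [(A_K − 1)/H_K, u]. -/
import Mathlib


open Finset in
/-- The candidate power allocation of Theorem 1: the strongest user K gets power t,
and every weaker user k < K gets the closed-form power
p_k(t) = (A_k − 1)·(1/H_k + t·∏_{i=k+1}^{K−1} A_i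
         + Σ_{i=k+1}^{K−1} (A_i − 1)/H_i · ∏_{j=k+1}^{i−1} A_j). -/
noncomputable def powerAlloc (K : ℕ) (H A : ℕ → ℝ) (t : ℝ) : ℕ → ℝ :=
  fun k => if k = K then t else
    (A k - 1) * (1 / H k + t * ∏ i ∈ Icc (k+1) (K-1), A i
      + ∑ i ∈ Icc (k+1) (K-1), (A i - 1) / H i * ∏ j ∈ Icc (k+1) (i-1), A j)

open Finset

namespace SeeAux

/-- Split off the bottom element of a sum over `Icc n m`. -/
lemma sum_Icc_bot {n m : ℕ} (h : n ≤ m) (f : ℕ → ℝ) :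
    ∑ i ∈ Icc n m, f i = f n + ∑ i ∈ Icc (n+1) m, f i := by
  rw [Finset.Icc_add_one_left_eq_Ioc, ← Finset.Ioc_insert_left h, Finset.sum_insert (by simp)]

lemma prod_Icc_bot {n m : ℕ} (h : n ≤ m) (f : ℕ → ℝ) :
    ∏ i ∈ Icc n m, f i = f n * ∏ i ∈ Icc (n+1) m, f i := by
  rw [Finset.Icc_add_one_left_eq_Ioc, ← Finset.Ioc_insert_left h, Finset.prod_insert (by simp)]

/-- The closed-form value of `θ_k` along the candidate allocation. -/
noncomputable def Tf (K : ℕ) (H A : ℕ → ℝ) (t : ℝ) (k : ℕ) : ℝ :=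
  t * ∏ i ∈ Icc k (K-1), A i + ∑ i ∈ Icc k (K-1), (A i - 1) / H i * ∏ j ∈ Icc k (i-1), A j

lemma Tf_K {K : ℕ} {H A : ℕ → ℝ} {t : ℝ} (hK : 1 ≤ K) : Tf K H A t K = t := by
  have : Icc K (K-1) = (∅ : Finset ℕ) := Icc_eq_empty (by omega)
  simp [Tf, this]

lemma Tf_rec {K k : ℕ} {H A : ℕ → ℝ} {t : ℝ} (hk1 : 1 ≤ k) (hk : k < K) :
    Tf K H A t k = (A k - 1) / H k + A k * Tf K H A t (k+1) := by
  have hkK : k ≤ K - 1 := by omega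
  have hempty : Icc k (k-1) = (∅ : Finset ℕ) := Icc_eq_empty (by omega)
  rw [Tf, Tf, prod_Icc_bot hkK,
    sum_Icc_bot hkK (fun i => (A i - 1) / H i * ∏ j ∈ Icc k (i-1), A j)]
  have hsum : ∑ i ∈ Icc (k+1) (K-1), (A i - 1) / H i * ∏ j ∈ Icc k (i-1), A j
      = A k * ∑ i ∈ Icc (k+1) (K-1), (A i - 1) / H i * ∏ j ∈ Icc (k+1) (i-1), A j := by
    rw [Finset.mul_sum]
    refine Finset.sum_congr rfl ?_
    intro i hi
    simp only [mem_Icc] at hi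
    rw [prod_Icc_bot (show k ≤ i - 1 by omega)]
    have : k + 1 = (i - 1) + 1 ∨ k + 1 ≤ i - 1 := by omega
    ring
  rw [hsum, hempty]
  simp
  ring

lemma Tf_nonneg {K k : ℕ} {H A : ℕ → ℝ} {t : ℝ} (hk1 : 1 ≤ k) (ht : 0 ≤ t)
    (hHpos : ∀ i, 1 ≤ i → i ≤ K → 0 < H i) (hA : ∀ i, 1 ≤ i → i ≤ K → 1 ≤ A i) :
    0 ≤ Tf K H A t k := by
  refine add_nonneg (mul_nonneg ht (Finset.prod_nonneg ?_)) (Finset.sum_nonneg ?_)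
  · intro i hi
    simp only [mem_Icc] at hi
    have := hA i (by omega) (by omega)
    linarith
  · intro i hi
    simp only [mem_Icc] at hi
    have h1 : 0 ≤ (A i - 1) / H i :=
      div_nonneg (by linarith [hA i (by omega) (by omega)]) (le_of_lt (hHpos i (by omega) (by omega)))
    refine mul_nonneg h1 (Finset.prod_nonneg ?_)
    intro j hj
    simp only [mem_Icc] at hj
    linarith [hA j (by omega) (by omega)]

lemma pa_eq {K k : ℕ} {H A : ℕ → ℝ} {t : ℝ} (hk : k ≠ K) :
    powerAlloc K H A t k = (A k - 1) * (1 / H k + Tf K H A t (k+1)) := by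
  simp only [powerAlloc, if_neg hk, Tf]
  ring

lemma theta_pa_aux {K : ℕ} {H A : ℕ → ℝ} {t : ℝ} :
    ∀ d k, 1 ≤ k → k + d = K → (∑ i ∈ Icc k K, powerAlloc K H A t i) = Tf K H A t k := by
  intro d
  induction d with
  | zero =>
      intro k hk1 hkK
      have hk : k = K := by omega
      subst hk
      rw [show Icc k k = {k} from Icc_self k, Finset.sum_singleton, Tf_K hk1]
      simp [powerAlloc]
  | succ n ih =>
      intro k hk1 hkK
      have hkK' : k < K := by omega
      rw [sum_Icc_bot (le_of_lt hkK'), ih (k+1) (by omega) (by omega),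
        pa_eq (by omega), Tf_rec hk1 hkK']
      have : (A k - 1) / H k = (A k - 1) * (1 / H k) := by ring
      rw [this]; ring

lemma theta_pa {K k : ℕ} {H A : ℕ → ℝ} {t : ℝ} (hk1 : 1 ≤ k) (hkK : k ≤ K) :
    (∑ i ∈ Icc k K, powerAlloc K H A t i) = Tf K H A t k :=
  theta_pa_aux (K - k) k hk1 (by omega)

/-- The per-user "rate" function of the telescoped objective. -/
noncomputable def fA (H : ℕ → ℝ) (He : ℝ) (k : ℕ) (x : ℝ) : ℝ :=
  (1/2) * Real.logb 2 (1 + H k * x) - (1/2) * Real.logb 2 (1 + He * x)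

lemma fA_zero {H : ℕ → ℝ} {He : ℝ} {k : ℕ} : fA H He k 0 = 0 := by simp [fA]

lemma log_ratio {h x y : ℝ} (hh : 0 < h) (hy : 0 ≤ y) (hxy : y ≤ x) :
    Real.logb 2 (1 + h * (x - y) / (h * y + 1))
      = Real.logb 2 (1 + h * x) - Real.logb 2 (1 + h * y) := by
  have hy1 : 0 < h * y + 1 := by positivity
  have hx1 : 0 < 1 + h * x := by nlinarith
  have hy1' : 0 < 1 + h * y := by nlinarith
  have heq : 1 + h * (x - y) / (h * y + 1) = (1 + h * x) / (1 + h * y) := by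
    field_simp
    ring
  rw [heq, Real.logb_div hx1.ne' hy1'.ne']

lemma regroup (f : ℕ → ℝ → ℝ) (x : ℕ → ℝ) (M : ℕ) :
    ∀ K, M ≤ K → ∑ k ∈ Icc M K, (f k (x k) - f k (x (k+1))) =
      f M (x M) - f K (x (K+1)) + ∑ k ∈ Icc (M+1) K, (f k (x k) - f (k-1) (x k)) := by
  refine Nat.le_induction ?_ ?_
  · simp
  · intro n hn ih
    rw [Finset.sum_Icc_succ_top (by omega), Finset.sum_Icc_succ_top (by omega), ih]
    simp only [Nat.add_sub_cancel]
    ring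

lemma logdiff_mono {h Hp x y : ℝ} (hh : 0 < h) (hH : h ≤ Hp) (hx : 0 ≤ x) (hxy : x ≤ y) :
    Real.logb 2 (1 + Hp*x) - Real.logb 2 (1 + h*x)
      ≤ Real.logb 2 (1 + Hp*y) - Real.logb 2 (1 + h*y) := by
  have hy : 0 ≤ y := le_trans hx hxy
  have h1 : 0 < 1 + Hp*x := by nlinarith
  have h2 : 0 < 1 + h*x := by nlinarith
  have h3 : 0 < 1 + Hp*y := by nlinarith
  have h4 : 0 < 1 + h*y := by nlinarith
  rw [← Real.logb_div h1.ne' h2.ne', ← Real.logb_div h3.ne' h4.ne']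
  refine Real.logb_le_logb_of_le one_lt_two (by positivity) ?_
  rw [div_le_div_iff₀ h2 h4]
  nlinarith [mul_nonneg (sub_nonneg.2 hH) (sub_nonneg.2 hxy)]


open Finset in
lemma psi_sum_rewrite {K M : ℕ} {H : ℕ → ℝ} {He : ℝ} (hM1 : 1 ≤ M) (hMK : M ≤ K)
    (hHpos : ∀ i, 1 ≤ i → i ≤ K → 0 < H i) (hHe : 0 < He)
    (p : ℕ → ℝ) (hp : ∀ i, 1 ≤ i → i ≤ K → 0 ≤ p i) :
    ∑ k ∈ Icc M K, ((1/2) * Real.logb 2 (1 + H k * p k / (H k * (∑ i ∈ Icc (k+1) K, p i) + 1))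
        - (1/2) * Real.logb 2 (1 + He * p k / (He * (∑ i ∈ Icc (k+1) K, p i) + 1)))
    = fA H He M (∑ i ∈ Icc M K, p i)
        + ∑ k ∈ Icc (M+1) K, (fA H He k (∑ i ∈ Icc k K, p i) - fA H He (k-1) (∑ i ∈ Icc k K, p i)) := by
  have key : ∀ k ∈ Icc M K,
      ((1/2) * Real.logb 2 (1 + H k * p k / (H k * (∑ i ∈ Icc (k+1) K, p i) + 1))
        - (1/2) * Real.logb 2 (1 + He * p k / (He * (∑ i ∈ Icc (k+1) K, p i) + 1)))
      = fA H He k (∑ i ∈ Icc k K, p i) - fA H He k (∑ i ∈ Icc (k+1) K, p i) := by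
    intro k hk
    simp only [mem_Icc] at hk
    have hk1 : 1 ≤ k := le_trans hM1 hk.1
    have hsplit : ∑ i ∈ Icc k K, p i = p k + ∑ i ∈ Icc (k+1) K, p i := sum_Icc_bot hk.2 p
    have hy : 0 ≤ ∑ i ∈ Icc (k+1) K, p i := by
      refine Finset.sum_nonneg ?_
      intro i hi; simp only [mem_Icc] at hi; exact hp i (by omega) hi.2
    have hpk : 0 ≤ p k := hp k hk1 hk.2
    have hxy : (∑ i ∈ Icc (k+1) K, p i) ≤ ∑ i ∈ Icc k K, p i := by linarith
    have hpk_eq : p k = (∑ i ∈ Icc k K, p i) - ∑ i ∈ Icc (k+1) K, p i := by linarith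
    rw [hpk_eq, log_ratio (hHpos k hk1 hk.2) hy hxy, log_ratio hHe hy hxy, fA, fA]
    ring
  rw [Finset.sum_congr rfl key,
    regroup (fA H He) (fun k => ∑ i ∈ Icc k K, p i) M K hMK]
  have h0 : ∑ i ∈ Icc (K+1) K, p i = 0 := by
    rw [Icc_eq_empty (by omega), Finset.sum_empty]
  simp only [h0, fA_zero]
  ring

end SeeAux

open Finset in
/-- In the K-user NOMA system with eavesdropper gain H_e between users
M−1 and M, every power vector p(t) with t ∈ [(A_K − 1)/H_K, u] is feasible, and the
maximum of the SEE objective Ψ over the feasible set Π is attained and equals the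
maximum of t ↦ Ψ(p(t)) over [(A_K − 1)/H_K, u]. -/
theorem see_multiuser_reduction_to_one_dimension
    (K M : ℕ) (hK : 2 ≤ K) (hM1 : 1 ≤ M) (hMK : M ≤ K)
    (H : ℕ → ℝ) (He : ℝ) (A : ℕ → ℝ) (α Pc Pmax : ℝ)
    (hH1 : 0 < H 1) (hHe : 0 < He)
    (hchain : ∀ k, 1 ≤ k → k < K → H k ≤ H (k+1))
    (hMe : 2 ≤ M → H (M - 1) ≤ He)
    (heM : He < H M)
    (hA : ∀ k ∈ Icc 1 K, 1 ≤ A k)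
    (hα : 0 < α) (hPc : 0 ≤ Pc)
    (hPmax : (∑ k ∈ Icc 1 K, (A k - 1) / H k * ∏ j ∈ Icc 1 (k-1), A j) ≤ Pmax) :
    letI θ : (ℕ → ℝ) → ℕ → ℝ := fun p k => ∑ i ∈ Icc k K, p i
    letI Pmin : ℝ := ∑ k ∈ Icc 1 K, (A k - 1) / H k * ∏ j ∈ Icc 1 (k-1), A j
    letI Ψ : (ℕ → ℝ) → ℝ := fun p =>
      (∑ k ∈ Icc M K,
        ((1/2) * Real.logb 2 (1 + H k * p k / (H k * θ p (k+1) + 1)) -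
         (1/2) * Real.logb 2 (1 + He * p k / (He * θ p (k+1) + 1))))
      - α * (θ p 1 + Pc)
    letI Feas : Set (ℕ → ℝ) := {p | (∀ i ∈ Icc 1 K, 0 ≤ p i) ∧ θ p 1 ≤ Pmax ∧
      ∀ k ∈ Icc 1 K, θ p k ≥ A k * θ p (k+1) + (A k - 1) / H k}
    letI u : ℝ := (Pmax - Pmin + (A K - 1) / H K * ∏ j ∈ Icc 1 (K-1), A j) /
      ∏ j ∈ Icc 1 (K-1), A j
    (∀ t ∈ Set.Icc ((A K - 1) / H K) u, powerAlloc K H A t ∈ Feas) ∧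
    (∃ Mv : ℝ, IsGreatest (Ψ '' Feas) Mv ∧
      IsGreatest ((fun t => Ψ (powerAlloc K H A t)) '' Set.Icc ((A K - 1) / H K) u) Mv) := by
  classical
  have hA' : ∀ i, 1 ≤ i → i ≤ K → 1 ≤ A i := fun i h1 h2 => hA i (Finset.mem_Icc.mpr ⟨h1, h2⟩)
  have hHmono : ∀ j k : ℕ, 1 ≤ j → j ≤ k → k ≤ K → H j ≤ H k := by
    intro j k hj
    induction k with
    | zero => intro h1 _; exact absurd (le_trans hj h1) (by omega)
    | succ m ih =>
        intro hjk hkK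
        by_cases h : j = m + 1
        · exact le_of_eq (by rw [h])
        · exact le_trans (ih (by omega) (by omega)) (hchain m (by omega) (by omega))
  have hHpos : ∀ i, 1 ≤ i → i ≤ K → 0 < H i := fun i h1 h2 =>
    lt_of_lt_of_le hH1 (hHmono 1 i le_rfl h1 h2)
  have hP1 : (1:ℝ) ≤ ∏ j ∈ Icc 1 (K-1), A j := by
    have := Finset.prod_le_prod (s := Icc 1 (K-1)) (f := fun _ => (1:ℝ)) (g := A)
      (fun i _ => zero_le_one) (fun j hj => by
        simp only [Finset.mem_Icc] at hj
        exact hA' j hj.1 (by omega))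
    simpa using this
  have hP0 : (0:ℝ) < ∏ j ∈ Icc 1 (K-1), A j := lt_of_lt_of_le one_pos hP1
  have hc0 : 0 ≤ (A K - 1) / H K :=
    div_nonneg (by linarith [hA' K (by omega) le_rfl]) (hHpos K (by omega) le_rfl).le
  have hPmin_split : (∑ k ∈ Icc 1 K, (A k - 1) / H k * ∏ j ∈ Icc 1 (k-1), A j)
      = (∑ k ∈ Icc 1 (K-1), (A k - 1) / H k * ∏ j ∈ Icc 1 (k-1), A j)
        + (A K - 1) / H K * ∏ j ∈ Icc 1 (K-1), A j := by
    obtain ⟨m, hm⟩ : ∃ m, K = m + 1 := ⟨K - 1, by omega⟩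
    rw [hm, Finset.sum_Icc_succ_top (by omega)]
    simp
  have hTf1 : ∀ t : ℝ, SeeAux.Tf K H A t 1
      = t * ∏ j ∈ Icc 1 (K-1), A j
        + ∑ k ∈ Icc 1 (K-1), (A k - 1) / H k * ∏ j ∈ Icc 1 (k-1), A j := fun t => rfl
  set c : ℝ := (A K - 1) / H K with hc_def
  set u : ℝ := (Pmax - (∑ k ∈ Icc 1 K, (A k - 1) / H k * ∏ j ∈ Icc 1 (k-1), A j)
      + (A K - 1) / H K * ∏ j ∈ Icc 1 (K-1), A j) / ∏ j ∈ Icc 1 (K-1), A j with hu_def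
  have hu_Tf : SeeAux.Tf K H A u 1 = Pmax := by
    rw [hTf1, hu_def, div_mul_cancel₀ _ hP0.ne', hPmin_split]
    ring
  have hcu : c ≤ u := by
    rw [hu_def, le_div_iff₀ hP0]
    have : (A K - 1) / H K * ∏ j ∈ Icc 1 (K-1), A j
        = (A K - 1) / H K * ∏ j ∈ Icc 1 (K-1), A j := rfl
    linarith [hPmax]
  have hpa_nonneg : ∀ t : ℝ, 0 ≤ t → ∀ i, 1 ≤ i → i ≤ K → 0 ≤ powerAlloc K H A t i := by
    intro t ht i hi1 hiK
    by_cases hik : i = K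
    · subst hik; simpa [powerAlloc] using ht
    · rw [SeeAux.pa_eq hik]
      refine mul_nonneg (by linarith [hA' i hi1 hiK]) (add_nonneg ?_ ?_)
      · exact (one_div_pos.mpr (hHpos i hi1 hiK)).le
      · exact SeeAux.Tf_nonneg (by omega) ht hHpos hA'
  have hfeas : ∀ t ∈ Set.Icc c u, powerAlloc K H A t ∈
      {p : ℕ → ℝ | (∀ i ∈ Icc 1 K, 0 ≤ p i) ∧ (∑ i ∈ Icc 1 K, p i) ≤ Pmax ∧
        ∀ k ∈ Icc 1 K, (∑ i ∈ Icc k K, p i) ≥ A k * (∑ i ∈ Icc (k+1) K, p i) + (A k - 1) / H k} := by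
    intro t ht
    obtain ⟨ht1, ht2⟩ := ht
    have ht0 : 0 ≤ t := le_trans hc0 ht1
    refine ⟨fun i hi => ?_, ?_, fun k hk => ?_⟩
    · simp only [Finset.mem_Icc] at hi
      exact hpa_nonneg t ht0 i hi.1 hi.2
    · rw [SeeAux.theta_pa (by omega) (by omega)]
      calc SeeAux.Tf K H A t 1 ≤ SeeAux.Tf K H A u 1 := by
            rw [hTf1, hTf1]
            have := mul_le_mul_of_nonneg_right ht2 hP0.le
            linarith
        _ = Pmax := hu_Tf
    · simp only [Finset.mem_Icc] at hk
      by_cases hkK : k = K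
      · have h0 : (∑ i ∈ Icc (K+1) K, powerAlloc K H A t i) = 0 := by
          rw [Finset.Icc_eq_empty (by omega), Finset.sum_empty]
        rw [hkK, ge_iff_le, h0, SeeAux.theta_pa (by omega) le_rfl, SeeAux.Tf_K (by omega)]
        have hcc : c = (A K - 1) / H K := hc_def
        simp only [mul_zero, zero_add]
        linarith [ht1]
      · have hkK' : k < K := by omega
        rw [ge_iff_le, SeeAux.theta_pa hk.1 hk.2, SeeAux.theta_pa (by omega) (by omega),
          SeeAux.Tf_rec hk.1 hkK']
        linarith
  refine ⟨hfeas, ?_⟩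
  -- continuity of the one-dimensional objective in telescoped form
  set g : ℝ → ℝ := fun t => SeeAux.fA H He M (SeeAux.Tf K H A t M)
      + (∑ k ∈ Icc (M+1) K, (SeeAux.fA H He k (SeeAux.Tf K H A t k)
          - SeeAux.fA H He (k-1) (SeeAux.Tf K H A t k)))
      - α * (SeeAux.Tf K H A t 1 + Pc) with hg_def
  have hTfc : ∀ k, Continuous fun t : ℝ => SeeAux.Tf K H A t k := by
    intro k
    simp only [SeeAux.Tf]
    exact (continuous_id.mul continuous_const).add continuous_const
  have hTfnn : ∀ k, 1 ≤ k → ∀ t ∈ Set.Icc c u, 0 ≤ SeeAux.Tf K H A t k := by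
    intro k hk t ht
    exact SeeAux.Tf_nonneg hk (le_trans hc0 ht.1) hHpos hA'
  have hlogb : ∀ h : ℝ, 0 < h → ∀ k, 1 ≤ k →
      ContinuousOn (fun t => Real.logb 2 (1 + h * SeeAux.Tf K H A t k)) (Set.Icc c u) := by
    intro h hh k hk
    have hne : ∀ t ∈ Set.Icc c u, (1 + h * SeeAux.Tf K H A t k) ≠ 0 := by
      intro t ht
      have := hTfnn k hk t ht
      nlinarith
    have hcomp : ContinuousOn (fun t => Real.log (1 + h * SeeAux.Tf K H A t k)) (Set.Icc c u) :=
      ContinuousOn.log ((continuous_const.add (continuous_const.mul (hTfc k))).continuousOn) hne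
    simpa [Real.logb] using hcomp.div_const (Real.log 2)
  have hfAc : ∀ j k, 1 ≤ j → j ≤ K → 1 ≤ k →
      ContinuousOn (fun t => SeeAux.fA H He j (SeeAux.Tf K H A t k)) (Set.Icc c u) := by
    intro j k hj hjK hk
    simp only [SeeAux.fA]
    exact (continuousOn_const.mul (hlogb (H j) (hHpos j hj hjK) k hk)).sub
      (continuousOn_const.mul (hlogb He hHe k hk))
  have hgc : ContinuousOn g (Set.Icc c u) := by
    rw [hg_def]
    refine ContinuousOn.sub (ContinuousOn.add (hfAc M M hM1 hMK hM1) ?_) ?_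
    · refine continuousOn_finset_sum _ fun k hk => ?_
      simp only [Finset.mem_Icc] at hk
      exact (hfAc k k (by omega) hk.2 (by omega)).sub
        (hfAc (k-1) k (by omega) (by omega) (by omega))
    · exact (continuous_const.mul ((hTfc 1).add continuous_const)).continuousOn
  obtain ⟨ts, hts, hmax⟩ := isCompact_Icc.exists_isMaxOn (Set.nonempty_Icc.mpr hcu) hgc
  -- the curve objective agrees with g on [c,u]
  have hθnn : ∀ (p : ℕ → ℝ), (∀ i, 1 ≤ i → i ≤ K → 0 ≤ p i) →
      ∀ k, 1 ≤ k → 0 ≤ ∑ i ∈ Icc k K, p i := by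
    intro p hp k hk
    refine Finset.sum_nonneg fun i hi => ?_
    simp only [Finset.mem_Icc] at hi
    exact hp i (by omega) hi.2
  have hEq : ∀ t ∈ Set.Icc c u,
      ((∑ k ∈ Icc M K,
        ((1/2) * Real.logb 2 (1 + H k * powerAlloc K H A t k /
            (H k * (∑ i ∈ Icc (k+1) K, powerAlloc K H A t i) + 1)) -
         (1/2) * Real.logb 2 (1 + He * powerAlloc K H A t k /
            (He * (∑ i ∈ Icc (k+1) K, powerAlloc K H A t i) + 1))))
        - α * ((∑ i ∈ Icc 1 K, powerAlloc K H A t i) + Pc)) = g t := by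
    intro t ht
    have ht0 : 0 ≤ t := le_trans hc0 ht.1
    rw [SeeAux.psi_sum_rewrite hM1 hMK hHpos hHe _ (hpa_nonneg t ht0)]
    rw [hg_def]
    have h1 : ∑ i ∈ Icc M K, powerAlloc K H A t i = SeeAux.Tf K H A t M :=
      SeeAux.theta_pa hM1 hMK
    have h2 : ∑ i ∈ Icc 1 K, powerAlloc K H A t i = SeeAux.Tf K H A t 1 :=
      SeeAux.theta_pa (by omega) (by omega)
    have h3 : ∑ k ∈ Icc (M+1) K, (SeeAux.fA H He k (∑ i ∈ Icc k K, powerAlloc K H A t i)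
          - SeeAux.fA H He (k-1) (∑ i ∈ Icc k K, powerAlloc K H A t i))
        = ∑ k ∈ Icc (M+1) K, (SeeAux.fA H He k (SeeAux.Tf K H A t k)
          - SeeAux.fA H He (k-1) (SeeAux.Tf K H A t k)) := by
      refine Finset.sum_congr rfl fun k hk => ?_
      simp only [Finset.mem_Icc] at hk
      rw [SeeAux.theta_pa (by omega) hk.2]
    rw [h1, h2, h3]
  -- any feasible point is dominated by some point on the curve
  have hcomp : ∀ p : ℕ → ℝ, (∀ i ∈ Icc 1 K, 0 ≤ p i) →
      (∑ i ∈ Icc 1 K, p i) ≤ Pmax →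
      (∀ k ∈ Icc 1 K, (∑ i ∈ Icc k K, p i) ≥ A k * (∑ i ∈ Icc (k+1) K, p i) + (A k - 1) / H k) →
      ∃ t ∈ Set.Icc c u,
        ((∑ k ∈ Icc M K,
          ((1/2) * Real.logb 2 (1 + H k * p k / (H k * (∑ i ∈ Icc (k+1) K, p i) + 1)) -
           (1/2) * Real.logb 2 (1 + He * p k / (He * (∑ i ∈ Icc (k+1) K, p i) + 1))))
          - α * ((∑ i ∈ Icc 1 K, p i) + Pc)) ≤ g t := by
    intro p hnn hbud hqos
    have hnn' : ∀ i, 1 ≤ i → i ≤ K → 0 ≤ p i := fun i h1 h2 => hnn i (Finset.mem_Icc.mpr ⟨h1, h2⟩)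
    -- lower bound on total power of a feasible point
    have hlow_aux : ∀ d k, 1 ≤ k → k + d = K → SeeAux.Tf K H A c k ≤ ∑ i ∈ Icc k K, p i := by
      intro d
      induction d with
      | zero =>
          intro k hk1 hkK
          have hkK' : k = K := by omega
          subst hkK'
          have h1 := hqos k (Finset.mem_Icc.mpr ⟨hk1, le_rfl⟩)
          have h0 : (∑ i ∈ Icc (k+1) k, p i) = 0 := by
            rw [Finset.Icc_eq_empty (by omega), Finset.sum_empty]
          rw [h0] at h1
          rw [SeeAux.Tf_K (by omega)]
          simpa [hc_def] using h1
      | succ n ih =>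
          intro k hk1 hkK
          have hkK' : k < K := by omega
          have h1 := hqos k (Finset.mem_Icc.mpr ⟨hk1, by omega⟩)
          have h2 := ih (k+1) (by omega) (by omega)
          rw [SeeAux.Tf_rec hk1 hkK']
          have hAk : (0:ℝ) ≤ A k := by linarith [hA' k hk1 (by omega)]
          nlinarith [mul_le_mul_of_nonneg_left h2 hAk]
    have hlow : SeeAux.Tf K H A c 1 ≤ ∑ i ∈ Icc 1 K, p i := hlow_aux (K-1) 1 le_rfl (by omega)
    set tp : ℝ := ((∑ i ∈ Icc 1 K, p i)
        - ∑ k ∈ Icc 1 (K-1), (A k - 1) / H k * ∏ j ∈ Icc 1 (k-1), A j)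
        / ∏ j ∈ Icc 1 (K-1), A j with htp_def
    have htp_Tf1 : SeeAux.Tf K H A tp 1 = ∑ i ∈ Icc 1 K, p i := by
      rw [hTf1, htp_def, div_mul_cancel₀ _ hP0.ne']
      ring
    have htp_ge : c ≤ tp := by
      rw [htp_def, le_div_iff₀ hP0]
      have := hTf1 c
      linarith [hlow]
    have htp_le : tp ≤ u := by
      rw [htp_def, hu_def, div_le_div_iff_of_pos_right hP0]
      linarith [hbud, hPmin_split]
    have htp0 : 0 ≤ tp := le_trans hc0 htp_ge
    have htpmem : tp ∈ Set.Icc c u := ⟨htp_ge, htp_le⟩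
    -- upward induction: θ_k(p) ≤ Tf tp k
    have hup : ∀ k, 1 ≤ k → k ≤ K → (∑ i ∈ Icc k K, p i) ≤ SeeAux.Tf K H A tp k := by
      intro k
      induction k with
      | zero => intro h; omega
      | succ n ih =>
          intro _ hnK
          by_cases hn : n = 0
          · subst hn
            exact le_of_eq htp_Tf1.symm
          · have hn1 : 1 ≤ n := by omega
            have hnK' : n < K := by omega
            have h1 := hqos n (Finset.mem_Icc.mpr ⟨hn1, by omega⟩)
            have h2 := ih hn1 (by omega)
            rw [SeeAux.Tf_rec hn1 hnK'] at h2
            have hAn : 1 ≤ A n := hA' n hn1 (by omega)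
            nlinarith [h1, h2, hAn]
    refine ⟨tp, htpmem, ?_⟩
    rw [SeeAux.psi_sum_rewrite hM1 hMK hHpos hHe p hnn', hg_def]
    beta_reduce
    have hterm1 : SeeAux.fA H He M (∑ i ∈ Icc M K, p i)
        ≤ SeeAux.fA H He M (SeeAux.Tf K H A tp M) := by
      simp only [SeeAux.fA]
      have := SeeAux.logdiff_mono hHe heM.le (hθnn p hnn' M hM1) (hup M hM1 hMK)
      linarith
    have hterm2 : ∑ k ∈ Icc (M+1) K, (SeeAux.fA H He k (∑ i ∈ Icc k K, p i)
          - SeeAux.fA H He (k-1) (∑ i ∈ Icc k K, p i))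
        ≤ ∑ k ∈ Icc (M+1) K, (SeeAux.fA H He k (SeeAux.Tf K H A tp k)
          - SeeAux.fA H He (k-1) (SeeAux.Tf K H A tp k)) := by
      refine Finset.sum_le_sum fun k hk => ?_
      simp only [Finset.mem_Icc] at hk
      have hk1 : 1 ≤ k - 1 := by omega
      have hHk : H (k-1) ≤ H k := by
        have := hchain (k-1) (by omega) (by omega)
        rwa [Nat.sub_add_cancel (by omega)] at this
      have hmono := SeeAux.logdiff_mono (hHpos (k-1) hk1 (by omega)) hHk
        (hθnn p hnn' k (by omega)) (hup k (by omega) hk.2)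
      simp only [SeeAux.fA]
      linarith
    have hterm3 : α * ((∑ i ∈ Icc 1 K, p i) + Pc) = α * (SeeAux.Tf K H A tp 1 + Pc) := by
      rw [htp_Tf1]
    linarith
  refine ⟨g ts, ⟨⟨powerAlloc K H A ts, hfeas ts hts, hEq ts hts⟩, ?_⟩,
    ⟨⟨ts, hts, hEq ts hts⟩, ?_⟩⟩
  · rintro v ⟨p, hp, rfl⟩
    obtain ⟨hnn, hbud, hqos⟩ := hp
    obtain ⟨t, htmem, hle⟩ := hcomp p hnn hbud hqos
    exact le_trans hle (hmax htmem)
  · rintro v ⟨t, htmem, rfl⟩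
    exact le_of_eq (hEq t htmem) |>.trans (hmax htmem)
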